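/- Let C be an additive category and let U' be the full subcategory of the morphism category Mor(C) consisting of objects of the form (X --1--> X) ⊕ (0 --> Y). Then the quotient category Mor(C)/[U'] is equivalent to (mod-C^op)^op, via sending an object f : X --> Y of Mor(C) to the cokernel of C(f,-) : C(Y,-) --> C(X,-). -/

import Mathlib

open CategoryTheory CategoryTheory.Limits Opposite ZeroObject CategoryTheory.Pretriangulated

universe w v u

namespace Paper

section IdealQuotient

variable (C : Type u) [Category.{v} C] [Preadditive C]

/-- The additive subgroup of morphisms `X ⟶ Y` generated by the morphisms factoring through
an object satisfying `P`; this is the ideal `[D]` associated to the full subcategory `D`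
of objects satisfying `P`. -/
def idealOf (P : C → Prop) (X Y : C) : AddSubgroup (X ⟶ Y) :=
  AddSubgroup.closure
    {f : X ⟶ Y | ∃ (Z : C), P Z ∧ ∃ (u : X ⟶ Z) (v : Z ⟶ Y), f = u ≫ v}

variable {C}

lemma idealOf_comp_left (P : C → Prop) {X Y Z : C} (h : X ⟶ Y) {x : Y ⟶ Z}
    (hx : x ∈ idealOf C P Y Z) : h ≫ x ∈ idealOf C P X Z := by
  have hle : idealOf C P Y Z ≤
      AddSubgroup.comap (Preadditive.leftComp Z h) (idealOf C P X Z) := by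
    rw [idealOf, AddSubgroup.closure_le]
    rintro g ⟨W, hW, u, v, rfl⟩
    exact AddSubgroup.subset_closure ⟨W, hW, h ≫ u, v, by simp [Preadditive.leftComp]⟩
  exact hle hx

lemma idealOf_comp_right (P : C → Prop) {X Y Z : C} {x : X ⟶ Y} (h : Y ⟶ Z)
    (hx : x ∈ idealOf C P X Y) : x ≫ h ∈ idealOf C P X Z := by
  have hle : idealOf C P X Y ≤
      AddSubgroup.comap (Preadditive.rightComp X h) (idealOf C P X Z) := by
    rw [idealOf, AddSubgroup.closure_le]
    rintro g ⟨W, hW, u, v, rfl⟩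
    exact AddSubgroup.subset_closure ⟨W, hW, u, v ≫ h, by simp [Preadditive.rightComp]⟩
  exact hle hx

variable (C)

/-- The hom relation on `C` identifying two morphisms whose difference lies in the
ideal of morphisms factoring through an object satisfying `P`. -/
def idealRel (P : C → Prop) : HomRel C := fun {X Y} f g => f - g ∈ idealOf C P X Y

instance idealRel_congruence (P : C → Prop) : Congruence (idealRel C P) where
  equivalence :=
    { refl := fun f => by simpa [idealRel] using (idealOf C P _ _).zero_mem
      symm := fun {f g} h => by
        simpa [idealRel, neg_sub] using (idealOf C P _ _).neg_mem h
      trans := fun {f g h} h₁ h₂ => by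
        simpa [idealRel, sub_add_sub_cancel] using (idealOf C P _ _).add_mem h₁ h₂ }
  comp_left := by
    intro X Y Z f g g' h
    simpa [idealRel, Preadditive.comp_sub] using idealOf_comp_left P f h
  comp_right := by
    intro X Y Z f f' g h
    simpa [idealRel, Preadditive.sub_comp] using idealOf_comp_right P g h

lemma idealRel_add (P : C → Prop) ⦃X Y : C⦄ (f₁ f₂ g₁ g₂ : X ⟶ Y)
    (h₁ : idealRel C P f₁ f₂) (h₂ : idealRel C P g₁ g₂) :
    idealRel C P (f₁ + g₁) (f₂ + g₂) := by
  simpa [idealRel, add_sub_add_comm] using (idealOf C P X Y).add_mem h₁ h₂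

/-- The quotient of `C` by the ideal of morphisms factoring through an object
satisfying `P`; e.g. the stable category `C/[𝒫]`. -/
abbrev IdealQuot (P : C → Prop) := CategoryTheory.Quotient (idealRel C P)

instance (P : C → Prop) : Preadditive (IdealQuot C P) :=
  Quotient.preadditive _ (idealRel_add C P)

instance (P : C → Prop) : (Quotient.functor (idealRel C P)).Additive :=
  Quotient.functor_additive _ (idealRel_add C P)

end IdealQuotient

section FP

variable (C : Type u) [Category.{v} C] [Preadditive C]

/-- A contravariant additive-group-valued functor is finitely presented if it is a cokernel
of a morphism between representable functors. -/
def IsFP (F : Cᵒᵖ ⥤ AddCommGrpCat.{v}) : Prop :=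
  ∃ (X Y : C) (f : X ⟶ Y), Nonempty (F ≅ cokernel (preadditiveYoneda.map f))

/-- The category `mod-C` of finitely presented contravariant functors. -/
abbrev ModCat := ObjectProperty.FullSubcategory (IsFP C)

/-- A covariant functor is finitely presented if it is a cokernel of a morphism
between corepresentable functors. -/
def IsFPCo (F : C ⥤ AddCommGrpCat.{v}) : Prop :=
  ∃ (X Y : C) (f : X ⟶ Y), Nonempty (F ≅ cokernel (preadditiveCoyoneda.map f.op))

/-- The category `mod-Cᵒᵖ` of finitely presented covariant functors. -/
abbrev CoModCat := ObjectProperty.FullSubcategory (IsFPCo C)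

end FP

section ArrowPreadditive

variable {C : Type u} [Category.{v} C] [Preadditive C]

namespace ArrowHom

variable {A B : Arrow C}

instance : Zero (A ⟶ B) := ⟨{ left := 0, right := 0, w := by simp }⟩
instance : Add (A ⟶ B) :=
  ⟨fun f g => { left := f.left + g.left, right := f.right + g.right,
                w := by simp [Preadditive.add_comp, Preadditive.comp_add] }⟩
instance : Neg (A ⟶ B) :=
  ⟨fun f => { left := -f.left, right := -f.right, w := by simp }⟩
instance : Sub (A ⟶ B) :=
  ⟨fun f g => { left := f.left - g.left, right := f.right - g.right,
                w := by simp [Preadditive.sub_comp, Preadditive.comp_sub] }⟩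
instance : SMul ℕ (A ⟶ B) :=
  ⟨fun n f => { left := n • f.left, right := n • f.right, w := by simp }⟩
instance : SMul ℤ (A ⟶ B) :=
  ⟨fun n f => { left := n • f.left, right := n • f.right, w := by simp }⟩

@[simp] lemma zero_left : (0 : A ⟶ B).left = 0 := rfl
@[simp] lemma zero_right : (0 : A ⟶ B).right = 0 := rfl
@[simp] lemma add_left (f g : A ⟶ B) : (f + g).left = f.left + g.left := rfl
@[simp] lemma add_right (f g : A ⟶ B) : (f + g).right = f.right + g.right := rfl
@[simp] lemma neg_left (f : A ⟶ B) : (-f).left = -f.left := rfl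
@[simp] lemma neg_right (f : A ⟶ B) : (-f).right = -f.right := rfl

def toPair (f : A ⟶ B) : (A.left ⟶ B.left) × (A.right ⟶ B.right) := (f.left, f.right)

lemma toPair_injective : Function.Injective (toPair (A := A) (B := B)) := by
  rintro ⟨⟩ ⟨⟩ h
  injection h with h₁ h₂
  exact CommaMorphism.ext h₁ h₂

instance : AddCommGroup (A ⟶ B) :=
  toPair_injective.addCommGroup toPair rfl (fun _ _ => rfl) (fun _ => rfl) (fun _ _ => rfl)
    (fun _ _ => rfl) (fun _ _ => rfl)

end ArrowHom

instance : Preadditive (Arrow C) where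
  homGroup A B := inferInstance
  add_comp := by
    intros; apply CommaMorphism.ext <;> simp [Preadditive.add_comp]
  comp_add := by
    intros; apply CommaMorphism.ext <;> simp [Preadditive.comp_add]

end ArrowPreadditive


/-- objects of `Mor(C)` of the form `(X —1→ X) ⊕ (0 → Y)` -/
def IsU'Obj (C : Type u) [Category.{v} C] [Preadditive C] [HasZeroObject C]
    [HasBinaryBiproducts C] (a : Arrow C) : Prop :=
  ∃ (X Y : C), Nonempty (a ≅ Arrow.mk (biprod.map (𝟙 X) (0 : (0 : C) ⟶ Y)))

section Statement1Proof

variable {C : Type u} [Category.{v} C] [Preadditive C] [HasZeroObject C] [HasBinaryBiproducts C]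

noncomputable section

/-- The map `C(a.right, -) ⟶ C(a.left, -)` induced by `a.hom`. -/
abbrev etaOf (a : Arrow C) :
    preadditiveCoyoneda.obj (op a.right) ⟶ preadditiveCoyoneda.obj (op a.left) :=
  preadditiveCoyoneda.map a.hom.op

/-- The object map of the functor `Mor(C) → (mod-Cᵒᵖ)ᵒᵖ`. -/
abbrev Gobj (a : Arrow C) : C ⥤ AddCommGrpCat.{v} := cokernel (etaOf a)

/-- The (contravariant) morphism map. -/
def Gmap {a b : Arrow C} (φ : a ⟶ b) : Gobj b ⟶ Gobj a :=
  cokernel.map (etaOf b) (etaOf a) (preadditiveCoyoneda.map φ.right.op)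
    (preadditiveCoyoneda.map φ.left.op) (by
      rw [← Functor.map_comp, ← Functor.map_comp, ← op_comp, ← op_comp, Arrow.w])

lemma pi_Gmap {a b : Arrow C} (φ : a ⟶ b) :
    cokernel.π (etaOf b) ≫ Gmap φ = preadditiveCoyoneda.map φ.left.op ≫ cokernel.π (etaOf a) := by
  simp [Gmap]

lemma Gmap_id (a : Arrow C) : Gmap (𝟙 a) = 𝟙 (Gobj a) := by
  apply coequalizer.hom_ext
  simp [pi_Gmap]

lemma Gmap_comp {a b c : Arrow C} (φ : a ⟶ b) (ψ : b ⟶ c) :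
    Gmap (φ ≫ ψ) = Gmap ψ ≫ Gmap φ := by
  apply coequalizer.hom_ext
  have : preadditiveCoyoneda.map (φ ≫ ψ).left.op =
      preadditiveCoyoneda.map ψ.left.op ≫ preadditiveCoyoneda.map φ.left.op := by
    rw [← Functor.map_comp, ← op_comp]; rfl
  simp [pi_Gmap, reassoc_of% (pi_Gmap ψ), this]

lemma coyoneda_map_add {X Y : Cᵒᵖ} (f g : X ⟶ Y) :
    preadditiveCoyoneda.map (f + g)
      = preadditiveCoyoneda.map f + preadditiveCoyoneda.map g := by
  ext T (h : unop X ⟶ T)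
  show (f + g).unop ≫ h = f.unop ≫ h + g.unop ≫ h
  rw [unop_add, Preadditive.add_comp]

lemma Gmap_add {a b : Arrow C} (φ ψ : a ⟶ b) : Gmap (φ + ψ) = Gmap φ + Gmap ψ := by
  apply coequalizer.hom_ext
  have h1 : (φ + ψ).left = φ.left + ψ.left := rfl
  simp [pi_Gmap, h1, coyoneda_map_add, Preadditive.add_comp, Preadditive.comp_add]

/-- `Gmap` as an additive map. -/
def GmapHom (a b : Arrow C) : (a ⟶ b) →+ (Gobj b ⟶ Gobj a) :=
  AddMonoidHom.mk' Gmap (Gmap_add)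

lemma isZero_Gobj_of_isU' {u : Arrow C} (hu : IsU'Obj C u) : IsZero (Gobj u) := by
  obtain ⟨X, Y, ⟨e⟩⟩ := hu
  have hiso : Gobj (Arrow.mk (biprod.map (𝟙 X) (0 : (0 : C) ⟶ Y))) ≅ Gobj u :=
    ⟨Gmap e.hom, Gmap e.inv, by rw [← Gmap_comp, e.inv_hom_id, Gmap_id],
      by rw [← Gmap_comp, e.hom_inv_id, Gmap_id]⟩
  refine IsZero.of_iso ?_ hiso.symm
  set f : X ⊞ (0 : C) ⟶ X ⊞ Y := biprod.map (𝟙 X) (0 : (0 : C) ⟶ Y) with hf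
  have hfr : f ≫ (biprod.fst ≫ biprod.inl) = 𝟙 (X ⊞ (0 : C)) := by
    apply biprod.hom_ext
    · simp [hf]
    · exact (isZero_zero C).eq_of_tgt _ _
  have hsplit : SplitEpi (etaOf (Arrow.mk f)) :=
    ⟨preadditiveCoyoneda.map (biprod.fst ≫ biprod.inl : X ⊞ Y ⟶ X ⊞ (0 : C)).op, by
      rw [← Functor.map_comp, ← op_comp]
      show preadditiveCoyoneda.map (f ≫ (biprod.fst ≫ biprod.inl)).op = _
      rw [hfr, CategoryTheory.op_id]; exact preadditiveCoyoneda.map_id _⟩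
  haveI : IsSplitEpi (etaOf (Arrow.mk f)) := ⟨⟨hsplit⟩⟩
  have hπ : cokernel.π (etaOf (Arrow.mk f)) = 0 := by
    rw [← cancel_epi (etaOf (Arrow.mk f)), cokernel.condition, comp_zero]
  exact IsZero.of_epi_eq_zero _ hπ

lemma Gmap_eq_zero_of_mem {a b : Arrow C} {φ : a ⟶ b}
    (h : φ ∈ idealOf (Arrow C) (IsU'Obj C) a b) : Gmap φ = 0 := by
  have hle : idealOf (Arrow C) (IsU'Obj C) a b ≤ (GmapHom a b).ker := by
    rw [idealOf, AddSubgroup.closure_le]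
    rintro x ⟨Z, hZ, α, β, rfl⟩
    have hz : Gmap β = 0 := (isZero_Gobj_of_isU' hZ).eq_zero_of_tgt _
    show Gmap (α ≫ β) = 0
    rw [Gmap_comp, hz, zero_comp]
  exact hle h


lemma pi_app_surjective (a : Arrow C) (T : C) :
    Function.Surjective ((cokernel.π (etaOf a)).app T) :=
  (AddCommGrpCat.epi_iff_surjective _).1 inferInstance

lemma pi_app_eq_zero_iff (a : Arrow C) {T : C} (x : a.left ⟶ T) :
    (cokernel.π (etaOf a)).app T x = 0 ↔ ∃ k : a.right ⟶ T, a.hom ≫ k = x := by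
  let E := (evaluation C AddCommGrpCat.{v}).obj T
  have hπ : cokernel.π (E.map (etaOf a)) ≫ cokernelComparison (etaOf a) E
      = E.map (cokernel.π (etaOf a)) := π_comp_cokernelComparison _ _
  have hinj : Function.Injective (cokernelComparison (etaOf a) E) :=
    (AddCommGrpCat.mono_iff_injective _).1 inferInstance
  have hinj2 : Function.Injective
      (AddCommGrpCat.cokernelIsoQuotient (E.map (etaOf a))).hom :=
    (AddCommGrpCat.mono_iff_injective _).1 inferInstance
  have hmk : cokernel.π (E.map (etaOf a))
        ≫ (AddCommGrpCat.cokernelIsoQuotient (E.map (etaOf a))).hom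
      = AddCommGrpCat.ofHom (QuotientAddGroup.mk' (E.map (etaOf a)).hom.range) := cokernel.π_desc _ _ _
  have key : ∀ y : E.obj (preadditiveCoyoneda.obj (op a.left)),
      E.map (cokernel.π (etaOf a)) y = 0 ↔ y ∈ (E.map (etaOf a)).hom.range := by
    intro y
    rw [← hπ, CategoryTheory.comp_apply, map_eq_zero_iff _ hinj,
      ← map_eq_zero_iff _ hinj2, ← CategoryTheory.comp_apply, hmk]
    exact QuotientAddGroup.eq_zero_iff y
  have hr : ∀ y : a.left ⟶ T,
      y ∈ (E.map (etaOf a)).hom.range ↔ ∃ k : a.right ⟶ T, a.hom ≫ k = y := by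
    intro y
    constructor
    · rintro ⟨k, hk⟩; exact ⟨k, hk⟩
    · rintro ⟨k, hk⟩; exact ⟨k, hk⟩
  exact (key x).trans (hr x)


lemma natapp {F G : C ⥤ AddCommGrpCat.{v}} (α : F ⟶ G) {S T : C} (g : S ⟶ T) (x : F.obj S) :
    α.app T (F.map g x) = G.map g (α.app S x) := by
  rw [← CategoryTheory.comp_apply, α.naturality g, CategoryTheory.comp_apply]

lemma mem_ideal_of_Gmap_eq_zero {a b : Arrow C} {φ : a ⟶ b} (h : Gmap φ = 0) :
    φ ∈ idealOf (Arrow C) (IsU'Obj C) a b := by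
  have h1 : preadditiveCoyoneda.map φ.left.op ≫ cokernel.π (etaOf a) = 0 := by
    rw [← pi_Gmap, h, comp_zero]
  have h2 : (cokernel.π (etaOf a)).app b.left φ.left = 0 := by
    have h3 := congrArg (fun (t : _ ⟶ Gobj a) => t.app b.left (𝟙 b.left)) h1
    have e : ((preadditiveCoyoneda.map φ.left.op).app b.left) (𝟙 b.left) = φ.left := by
      show φ.left ≫ 𝟙 b.left = φ.left
      simp
    simp only [NatTrans.comp_app] at h3
    have h4 : ((cokernel.π (etaOf a)).app b.left)
        (((preadditiveCoyoneda.map φ.left.op).app b.left) (𝟙 b.left)) = 0 := h3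
    rw [e] at h4
    exact h4
  obtain ⟨k, hk⟩ := (pi_app_eq_zero_iff a φ.left).1 h2
  let α : a ⟶ Arrow.mk (biprod.map (𝟙 b.left) (0 : (0 : C) ⟶ b.right)) :=
    { left := biprod.lift φ.left 0
      right := biprod.lift k 0
      w := by apply biprod.hom_ext <;> simp [hk] }
  let β : Arrow.mk (biprod.map (𝟙 b.left) (0 : (0 : C) ⟶ b.right)) ⟶ b :=
    { left := biprod.fst
      right := biprod.desc b.hom (𝟙 b.right)
      w := by
        apply biprod.hom_ext'
        · simp
        · exact (isZero_zero C).eq_of_src _ _ }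
  let γ : a ⟶ Arrow.mk (biprod.map (𝟙 (0 : C)) (0 : (0 : C) ⟶ b.right)) :=
    { left := 0
      right := biprod.lift 0 ((φ.right : a.right ⟶ b.right) - (k ≫ b.hom : a.right ⟶ b.right))
      w := by
        apply biprod.hom_ext
        · simp
        · simp only [Functor.id_map, Preadditive.comp_sub, Category.assoc, biprod.lift_snd,
            zero_comp, Preadditive.sub_comp]
          rw [← Category.assoc, hk, Arrow.w]
          simp }
  let δ : Arrow.mk (biprod.map (𝟙 (0 : C)) (0 : (0 : C) ⟶ b.right)) ⟶ b :=
    { left := 0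
      right := biprod.snd
      w := by simp }
  have hφ : φ = α ≫ β + γ ≫ δ := by
    apply CommaMorphism.ext
    · show φ.left = α.left ≫ β.left + γ.left ≫ δ.left
      simp [α, β, γ, δ, Arrow.Hom.left, Arrow.Hom.right]
    · show φ.right = α.right ≫ β.right + γ.right ≫ δ.right
      simp [α, β, γ, δ, Arrow.Hom.left, Arrow.Hom.right]
  rw [hφ]
  refine AddSubgroup.add_mem _ ?_ ?_
  · exact AddSubgroup.subset_closure ⟨_, ⟨b.left, b.right, ⟨Iso.refl _⟩⟩, α, β, rfl⟩
  · exact AddSubgroup.subset_closure ⟨_, ⟨(0 : C), b.right, ⟨Iso.refl _⟩⟩, γ, δ, rfl⟩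

lemma exists_Gmap_eq {a b : Arrow C} (ψ : Gobj b ⟶ Gobj a) : ∃ φ : a ⟶ b, Gmap φ = ψ := by
  obtain ⟨u, hu⟩ := pi_app_surjective a b.left
    (ψ.app b.left ((cokernel.π (etaOf b)).app b.left (𝟙 b.left)))
  have key : cokernel.π (etaOf b) ≫ ψ = preadditiveCoyoneda.map u.op ≫ cokernel.π (etaOf a) := by
    ext T (g : b.left ⟶ T)
    show ψ.app T ((cokernel.π (etaOf b)).app T g) = (cokernel.π (etaOf a)).app T (u ≫ g)
    have e1 : ((preadditiveCoyoneda.obj (op b.left)).map g) (𝟙 b.left) = g := by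
      show 𝟙 b.left ≫ g = g
      simp
    have e2 : ((preadditiveCoyoneda.obj (op a.left)).map g) u = u ≫ g := rfl
    calc ψ.app T ((cokernel.π (etaOf b)).app T g)
        = ψ.app T ((cokernel.π (etaOf b)).app T
            (((preadditiveCoyoneda.obj (op b.left)).map g) (𝟙 b.left))) := by rw [e1]
      _ = ψ.app T ((Gobj b).map g ((cokernel.π (etaOf b)).app b.left (𝟙 b.left))) := by
            exact congrArg (fun t => ψ.app T t) (natapp (cokernel.π (etaOf b)) g (𝟙 b.left))
      _ = (Gobj a).map g (ψ.app b.left ((cokernel.π (etaOf b)).app b.left (𝟙 b.left))) := by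
            rw [natapp]
      _ = (Gobj a).map g ((cokernel.π (etaOf a)).app b.left u) := by rw [hu]
      _ = (cokernel.π (etaOf a)).app T (((preadditiveCoyoneda.obj (op a.left)).map g) u) := by
            rw [natapp]
      _ = (cokernel.π (etaOf a)).app T (u ≫ g) := by rw [e2]
  have hz : (cokernel.π (etaOf a)).app b.right (u ≫ b.hom) = 0 := by
    have h0 : etaOf b ≫ cokernel.π (etaOf b) ≫ ψ = 0 := by
      rw [cokernel.condition_assoc, zero_comp]
    rw [key] at h0
    have h3 := congrArg (fun (t : _ ⟶ Gobj a) => t.app b.right (𝟙 b.right)) h0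
    have e : ((preadditiveCoyoneda.map (Quiver.Hom.op u)).app b.right)
        (((etaOf b).app b.right) (𝟙 b.right)) = u ≫ b.hom := by
      show u ≫ b.hom ≫ 𝟙 b.right = u ≫ b.hom
      simp
    simp only [NatTrans.comp_app] at h3
    have h4 : ((cokernel.π (etaOf a)).app b.right)
        (((preadditiveCoyoneda.map (Quiver.Hom.op u)).app b.right)
          (((etaOf b).app b.right) (𝟙 b.right))) = 0 := h3
    rw [e] at h4
    exact h4
  obtain ⟨v, hv⟩ := (pi_app_eq_zero_iff a (u ≫ b.hom)).1 hz
  refine ⟨{ left := u, right := v, w := by exact hv.symm }, ?_⟩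
  apply coequalizer.hom_ext
  have := pi_Gmap (a := a) (b := b) { left := u, right := v, w := by exact hv.symm }
  simp only [coequalizer_as_cokernel] at *
  rw [this, ← key]


/-- The functor `Mor(C) ⥤ (mod-Cᵒᵖ)ᵒᵖ`, `a ↦ Coker C(a.hom, -)`. -/
def Gfun : Arrow C ⥤ (CoModCat C)ᵒᵖ where
  obj a := op ⟨Gobj a, a.left, a.right, a.hom, ⟨Iso.refl _⟩⟩
  map {a b} φ :=
    (ObjectProperty.homMk (Gmap φ) : (⟨Gobj b, b.left, b.right, b.hom, ⟨Iso.refl _⟩⟩ : CoModCat C) ⟶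
        ⟨Gobj a, a.left, a.right, a.hom, ⟨Iso.refl _⟩⟩).op
  map_id a := Quiver.Hom.unop_inj (ObjectProperty.hom_ext _ (Gmap_id a))
  map_comp φ ψ := Quiver.Hom.unop_inj (ObjectProperty.hom_ext _ (Gmap_comp φ ψ))

lemma Gfun_descends (a b : Arrow C) (φ ψ : a ⟶ b)
    (h : idealRel (Arrow C) (IsU'Obj C) φ ψ) : Gfun.map φ = Gfun.map ψ := by
  apply Quiver.Hom.unop_inj
  apply ObjectProperty.hom_ext
  show Gmap φ = Gmap ψ
  have hz : Gmap (φ - ψ) = 0 := Gmap_eq_zero_of_mem h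
  have hsub : Gmap (φ - ψ) = Gmap φ - Gmap ψ := map_sub (GmapHom a b) φ ψ
  rw [hsub] at hz
  exact sub_eq_zero.1 hz

/-- The induced functor `Mor(C)/[U'] ⥤ (mod-Cᵒᵖ)ᵒᵖ`. -/
def GfunQ : IdealQuot (Arrow C) (IsU'Obj C) ⥤ (CoModCat C)ᵒᵖ :=
  CategoryTheory.Quotient.lift _ Gfun Gfun_descends

instance GfunQ_faithful : (GfunQ (C := C)).Faithful where
  map_injective {X Y} := by
    intro f g hfg
    obtain ⟨f', rfl⟩ := (Quotient.functor (idealRel (Arrow C) (IsU'Obj C))).map_surjective f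
    obtain ⟨g', rfl⟩ := (Quotient.functor (idealRel (Arrow C) (IsU'Obj C))).map_surjective g
    have h : Gmap f' = Gmap g' := by
      have h2 : Gfun.map f' = Gfun.map g' := hfg
      exact congrArg (fun t => t.unop.hom) h2
    apply CategoryTheory.Quotient.sound
    show (f' - g') ∈ idealOf (Arrow C) (IsU'Obj C) _ _
    apply mem_ideal_of_Gmap_eq_zero
    have hsub : Gmap (f' - g') = Gmap f' - Gmap g' := map_sub (GmapHom _ _) f' g'
    rw [hsub, h, sub_self]

instance GfunQ_full : (GfunQ (C := C)).Full where
  map_surjective {X Y} ψ := by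
    obtain ⟨φ, hφ⟩ := exists_Gmap_eq (a := X.as) (b := Y.as) ψ.unop.hom
    exact ⟨(Quotient.functor _).map φ, Quiver.Hom.unop_inj (ObjectProperty.hom_ext _ hφ)⟩

instance GfunQ_essSurj : (GfunQ (C := C)).EssSurj where
  mem_essImage Fop := by
    obtain ⟨X, Y, f, ⟨i⟩⟩ := Fop.unop.property
    refine ⟨(Quotient.functor _).obj (Arrow.mk f), ⟨?_⟩⟩
    exact Iso.op
      (⟨ObjectProperty.homMk i.hom, ObjectProperty.homMk i.inv, ObjectProperty.hom_ext _ i.hom_inv_id,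
          ObjectProperty.hom_ext _ i.inv_hom_id⟩ :
        (Fop.unop : CoModCat C) ≅
          ⟨Gobj (Arrow.mk f), (Arrow.mk f).left, (Arrow.mk f).right, (Arrow.mk f).hom,
            ⟨Iso.refl _⟩⟩)

instance GfunQ_isEquivalence : (GfunQ (C := C)).IsEquivalence := {}

end

end Statement1Proof

/-- Let `C` be an additive category and `U'` the full subcategory of `Mor(C)`
consisting of objects `(X —1→ X) ⊕ (0 → Y)`. Then `Mor(C)/[U']` is equivalent to
`(mod-Cᵒᵖ)ᵒᵖ`, via `f ↦ Coker C(f, -)`. -/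
theorem statement1 (C : Type u) [Category.{v} C] [Preadditive C] [HasZeroObject C]
    [HasBinaryBiproducts C] :
    ∃ e : IdealQuot (Arrow C) (IsU'Obj C) ≌ (CoModCat C)ᵒᵖ,
      ∀ a : Arrow C,
        Nonempty
          (((e.functor.obj ((Quotient.functor (idealRel (Arrow C) (IsU'Obj C))).obj a)).unop).obj ≅
            cokernel (preadditiveCoyoneda.map a.hom.op)) := by
  exact ⟨(GfunQ (C := C)).asEquivalence, fun a => ⟨Iso.refl _⟩⟩

end Paper
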